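/- Let q be a prime power, let V₃ = GF(q²)³ regarded as a 6-dimensional vector space V over GF(q), let τ be a nonzero alternating GF(q²)-trilinear form on V₃, and define T(x,y,z) = Tr(τ(x,y,z)) where Tr : GF(q²) → GF(q) is the field trace. Then T is a nondegenerate alternating GF(q)-trilinear form on V, and for every nonzero a ∈ V₃ and every ρ ∈ GF(q²) \ GF(q), the 2-dimensional GF(q)-subspace span_{GF(q)}{a, ρa} is a T-singular line. -/

import Mathlib

section aux

variable {K : Type*} [Field K]

lemma aux_upd1 (τ : AlternatingMap K (Fin 3 → K) K (Fin 3)) (α : K) (a x y : Fin 3 → K) :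
    τ ![a, α • x, y] = α * τ ![a, x, y] := by
  have h1 : ![a, α • x, y] = Function.update ![a, x, y] 1 (α • x) := by
    ext i j; fin_cases i <;> simp
  have h2 : Function.update ![a, x, y] 1 x = ![a, x, y] := by
    ext i j; fin_cases i <;> simp
  rw [h1, τ.map_update_smul, h2, smul_eq_mul]

lemma aux_upd0 (τ : AlternatingMap K (Fin 3 → K) K (Fin 3)) (α : K) (a x y : Fin 3 → K) :
    τ ![α • a, x, y] = α * τ ![a, x, y] := by
  have h1 : ![α • a, x, y] = Function.update ![a, x, y] 0 (α • a) := by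
    ext i j; fin_cases i <;> simp
  have h2 : Function.update ![a, x, y] 0 a = ![a, x, y] := by
    ext i j; fin_cases i <;> simp
  rw [h1, τ.map_update_smul, h2, smul_eq_mul]

lemma aux_alt (τ : AlternatingMap K (Fin 3 → K) K (Fin 3)) (β γ : K) (a x : Fin 3 → K) :
    τ ![β • a, γ • a, x] = 0 := by
  rw [aux_upd0, aux_upd1]
  rw [τ.map_eq_zero_of_eq ![a, a, x] (i := 0) (j := 1) rfl (by decide)]
  ring

end aux

/-- Let `τ` be a nonzero alternating `GF(q²)`-trilinear form on `V₃ = GF(q²)³`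
and `T = Tr ∘ τ` with `Tr(β) = β + β^q`.  Then `T` is a nondegenerate
alternating `GF(q)`-trilinear form on the 6-dimensional `GF(q)`-space `V₃`,
and for every nonzero `a` and every `ρ ∈ GF(q²) \ GF(q)` the `GF(q)`-span of
`{a, ρa}` is a `T`-singular line. -/
theorem stmt_12 (F K : Type*) [Field F] [Fintype F] [Field K] [Fintype K]
    [Algebra F K] (hK : Fintype.card K = Fintype.card F ^ 2)
    (τ : AlternatingMap K (Fin 3 → K) K (Fin 3)) (hτ : τ ≠ 0) :
    (∃ T : AlternatingMap F (Fin 3 → K) K (Fin 3),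
        ∀ v, T v = τ v + (τ v) ^ Fintype.card F) ∧
    (∀ a : Fin 3 → K,
      (∀ x y, τ ![a, x, y] + (τ ![a, x, y]) ^ Fintype.card F = 0) → a = 0) ∧
    (∀ a : Fin 3 → K, a ≠ 0 → ∀ ρ : K, ρ ∉ Set.range (algebraMap F K) →
      Module.finrank F (Submodule.span F {a, ρ • a} : Submodule F (Fin 3 → K)) = 2 ∧
      ∀ b ∈ Submodule.span F {a, ρ • a}, ∀ c ∈ Submodule.span F {a, ρ • a},
        ∀ x, τ ![b, c, x] + (τ ![b, c, x]) ^ Fintype.card F = 0) := by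
  classical
  set q := Fintype.card F with hq
  -- characteristic facts
  set p := ringChar F with hpdef
  haveI : CharP F p := ringChar.charP F
  have hp : p.Prime := CharP.char_is_prime F p
  haveI := Fact.mk hp
  haveI : CharP K p := charP_of_injective_algebraMap (algebraMap F K).injective p
  obtain ⟨n, -, hn⟩ : ∃ n : ℕ+, p.Prime ∧ q = p ^ (n : ℕ) := FiniteField.card F p
  have hq1 : 1 < q := Fintype.one_lt_card
  have hq0 : q ≠ 0 := by omega
  have hfa : ∀ x y : K, (x + y) ^ q = x ^ q + y ^ q := by
    intro x y; rw [hn]; exact add_pow_char_pow x y p ↑n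
  have hff : ∀ s : F, (algebraMap F K s) ^ q = algebraMap F K s := by
    intro s; rw [← map_pow, FiniteField.pow_card]
  -- the trace is not identically zero
  have htr : ∃ z : K, z + z ^ q ≠ 0 := by
    by_contra hz
    push_neg at hz
    set f : Polynomial K := Polynomial.X ^ q + Polynomial.X with hf
    have hfe : ∀ z : K, f.eval z = 0 := by
      intro z; simp only [hf, Polynomial.eval_add, Polynomial.eval_pow, Polynomial.eval_X]
      rw [add_comm]; exact hz z
    have hdeg : f.natDegree ≤ q := by
      apply le_trans (Polynomial.natDegree_add_le _ _)
      simp only [Polynomial.natDegree_X_pow, Polynomial.natDegree_X]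
      omega
    have hflt : (f.natDegree : Cardinal) < Cardinal.mk K := by
      rw [Cardinal.mk_fintype, hK]
      have : f.natDegree < q ^ 2 := by nlinarith
      exact_mod_cast this
    have hf0 : f = 0 := Polynomial.eq_zero_of_forall_eval_zero_of_natDegree_lt_card f hfe hflt
    have : f.coeff 1 = 1 := by
      rw [hf, Polynomial.coeff_add, Polynomial.coeff_X_pow, Polynomial.coeff_X_one,
        if_neg (by omega : ¬(1 = q))]
      ring
    rw [hf0] at this
    simp at this
  -- the linear map x ↦ x + x^q over F
  have φsmul : ∀ (s : F) (x : K), (s • x) + (s • x) ^ q = s • (x + x ^ q) := by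
    intro s x
    rw [Algebra.smul_def, Algebra.smul_def, mul_pow, hff, mul_add]
  refine ⟨?_, ?_, ?_⟩
  · -- existence of T
    set φ : K →ₗ[F] K :=
      { toFun := fun x => x + x ^ q
        map_add' := fun x y => by
          show (x + y) + (x + y) ^ q = (x + x ^ q) + (y + y ^ q)
          rw [hfa]; ring
        map_smul' := fun s x => by
          show (s • x) + (s • x) ^ q = s • (x + x ^ q)
          exact φsmul s x }
    refine ⟨{ toMultilinearMap := φ.compMultilinearMap (τ.toMultilinearMap.restrictScalars F),
              map_eq_zero_of_eq' := ?_ }, fun v => rfl⟩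
    intro v i j hv hij
    have : τ v = 0 := τ.map_eq_zero_of_eq v hv hij
    simp [φ, this, hq0]
  · -- nondegeneracy
    intro a h
    by_contra ha
    -- find a coordinate where a is nonzero
    have : ∃ i, a i ≠ 0 := by
      by_contra h'; push_neg at h'; exact ha (funext h')
    obtain ⟨i, hai⟩ := this
    set e : Module.Basis (Fin 3) K (Fin 3 → K) := Pi.basisFun K (Fin 3) with he
    have hτdet : τ = τ ⇑e • e.det := τ.eq_smul_basis_det e
    have hc : τ ⇑e ≠ 0 := by
      intro h0; apply hτ; rw [hτdet, h0, zero_smul]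
    -- from the hypothesis, any nonzero value of τ ![a, x, y] gives a contradiction
    have key : ∀ x y : Fin 3 → K, τ ![a, x, y] ≠ 0 → False := by
      intro x y hne
      obtain ⟨z, hz⟩ := htr
      have h1 := h ((z / τ ![a, x, y]) • x) y
      rw [aux_upd1, div_mul_cancel₀ _ hne] at h1
      exact hz h1
    -- compute τ ![a, e j, e k] for suitable j k
    have hval : ∀ v : Fin 3 → (Fin 3 → K), τ v = τ ⇑e * e.det v := by
      intro v
      conv_lhs => rw [hτdet]
      rfl
    fin_cases i
    · exact key (Pi.single 1 1) (Pi.single 2 1) (by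
        rw [hval]
        simp only [he]
        rw [show (Pi.basisFun K (Fin 3)).det ![a, Pi.single 1 1, Pi.single 2 1] = a 0 from by
          simp [-Pi.basisFun_det, Module.Basis.det_apply, Matrix.det_fin_three, Module.Basis.toMatrix_apply, Matrix.vecHead,
            Matrix.vecTail, Pi.single_apply]]
        exact mul_ne_zero hc hai)
    · exact key (Pi.single 0 1) (Pi.single 2 1) (by
        rw [hval]
        simp only [he]
        rw [show (Pi.basisFun K (Fin 3)).det ![a, Pi.single 0 1, Pi.single 2 1] = -a 1 from by
          simp [-Pi.basisFun_det, Module.Basis.det_apply, Matrix.det_fin_three, Module.Basis.toMatrix_apply, Matrix.vecHead,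
            Matrix.vecTail, Pi.single_apply]]
        simpa using mul_ne_zero hc (neg_ne_zero.mpr hai))
    · exact key (Pi.single 0 1) (Pi.single 1 1) (by
        rw [hval]
        simp only [he]
        rw [show (Pi.basisFun K (Fin 3)).det ![a, Pi.single 0 1, Pi.single 1 1] = a 2 from by
          simp [-Pi.basisFun_det, Module.Basis.det_apply, Matrix.det_fin_three, Module.Basis.toMatrix_apply, Matrix.vecHead,
            Matrix.vecTail, Pi.single_apply]]
        exact mul_ne_zero hc hai)
  · -- singular lines
    intro a ha ρ hρ
    have hinj : Function.Injective (algebraMap F K) := (algebraMap F K).injective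
    constructor
    · -- finrank = 2
      have hli : LinearIndependent F ![a, ρ • a] := by
        rw [LinearIndependent.pair_iff]
        intro s t hst
        have h1 : (algebraMap F K s + algebraMap F K t * ρ) • a = 0 := by
          rw [add_smul, mul_smul, algebraMap_smul, algebraMap_smul]; exact hst
        have h2 : algebraMap F K s + algebraMap F K t * ρ = 0 := by
          rcases smul_eq_zero.mp h1 with h | h
          · exact h
          · exact absurd h ha
        have ht : t = 0 := by
          by_contra ht
          have htK : algebraMap F K t ≠ 0 := fun h => ht (hinj (by simpa using h))
          refine hρ ⟨-(s / t), ?_⟩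
          rw [map_neg, map_div₀, ← neg_div, div_eq_iff htK]
          linear_combination -h2
        refine ⟨?_, ht⟩
        rw [ht] at h2
        simp at h2
        exact hinj (by simpa using h2)
      have hset : ({a, ρ • a} : Set (Fin 3 → K)) = Set.range ![a, ρ • a] := by
        rw [Matrix.range_cons, Matrix.range_cons_empty, Set.insert_eq]
      rw [hset, finrank_span_eq_card hli]
      simp
    · -- singularity
      have hmem : ∀ b ∈ Submodule.span F ({a, ρ • a} : Set (Fin 3 → K)), ∃ β : K, b = β • a := by
        intro b hb
        induction hb using Submodule.span_induction with
        | mem z hz =>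
          rcases hz with h | h
          · exact ⟨1, by rw [h, one_smul]⟩
          · exact ⟨ρ, h⟩
        | zero => exact ⟨0, by rw [zero_smul]⟩
        | add x y hx hy ihx ihy =>
          obtain ⟨β, hβ⟩ := ihx; obtain ⟨γ, hγ⟩ := ihy
          exact ⟨β + γ, by rw [hβ, hγ, add_smul]⟩
        | smul s x hx ihx =>
          obtain ⟨β, hβ⟩ := ihx
          exact ⟨algebraMap F K s * β, by rw [hβ, mul_smul, algebraMap_smul]⟩
      intro b hb c hc x
      obtain ⟨β, rfl⟩ := hmem b hb
      obtain ⟨γ, rfl⟩ := hmem c hc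
      rw [aux_alt]
      rw [zero_pow hq0, add_zero]
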